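/- arXiv:1302.0225 — 3 statements merged into one kernel-verified Lean document; each statement's English description precedes it below -/
import Mathlib

section
/- Let Q be a Markov operator on a countable state space, reversible with respect to a measure λ and preserving finitely supported functions. Then for every finitely supported f and every n ≥ 0: ‖Q^{2n} f‖² − ‖Q^{2n+1} f‖² ≤ (nⁿ/(n+1)ⁿ⁺¹) ‖Qⁿf‖², where ‖·‖ is the λ-weighted L² norm. -/
open scoped BigOperators

/-- The Markov operator associated to a transition kernel `q`. -/
noncomputable def Qop {S : Type*} (q : S → S → ℝ) (f : S → ℝ) : S → ℝ :=
  fun i => ∑' j, q i j * f j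

/-- The `lam`-weighted inner product on functions on `S`. -/
noncomputable def ip {S : Type*} (lam : S → ℝ) (f g : S → ℝ) : ℝ :=
  ∑' i, f i * g i * lam i

/-! ### Auxiliary lemmas -/

lemma supp_zero {S : Type*} {g : S → ℝ} (hg : (Function.support g).Finite) :
    ∀ j ∉ hg.toFinset, g j = 0 := by
  intro j hj
  simp only [Set.Finite.mem_toFinset, Function.mem_support, not_not] at hj
  exact hj

lemma ip_eq_sum {S : Type*} (lam f g : S → ℝ) (s : Finset S)
    (h : ∀ i ∉ s, f i = 0 ∨ g i = 0) :
    ip lam f g = ∑ i ∈ s, f i * g i * lam i := by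
  refine tsum_eq_sum fun b hb => ?_
  rcases h b hb with h' | h' <;> rw [h'] <;> ring

lemma Qop_eq_sum {S : Type*} (q : S → S → ℝ) (g : S → ℝ) (s : Finset S)
    (h : ∀ j ∉ s, g j = 0) (i : S) :
    Qop q g i = ∑ j ∈ s, q i j * g j :=
  tsum_eq_sum fun b hb => by rw [h b hb, mul_zero]

lemma ip_nonneg {S : Type*} (lam : S → ℝ) (hlam : ∀ i, 0 < lam i) (g : S → ℝ) :
    0 ≤ ip lam g g :=
  tsum_nonneg fun i => mul_nonneg (mul_self_nonneg _) (hlam i).le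

/-- Self-adjointness of `Qop` w.r.t. the reversible measure. -/
lemma ip_Qop_comm {S : Type*} (q : S → S → ℝ) (lam : S → ℝ)
    (hrev : ∀ i j, lam i * q i j = lam j * q j i)
    (g h : S → ℝ) (hg : (Function.support g).Finite)
    (hh : (Function.support h).Finite) :
    ip lam (Qop q g) h = ip lam g (Qop q h) := by
  classical
  rw [ip_eq_sum lam (Qop q g) h hh.toFinset (fun i hi => Or.inr (supp_zero hh i hi)),
      ip_eq_sum lam g (Qop q h) hg.toFinset (fun j hj => Or.inl (supp_zero hg j hj))]
  have e1 : ∀ i, Qop q g i = ∑ j ∈ hg.toFinset, q i j * g j :=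
    Qop_eq_sum q g _ (supp_zero hg)
  have e2 : ∀ j, Qop q h j = ∑ i ∈ hh.toFinset, q j i * h i :=
    Qop_eq_sum q h _ (supp_zero hh)
  simp only [e1, e2, Finset.sum_mul, Finset.mul_sum]
  rw [Finset.sum_comm]
  refine Finset.sum_congr rfl fun j _ => Finset.sum_congr rfl fun i _ => ?_
  linear_combination g j * h i * hrev i j

/-- Cauchy–Schwarz for `ip`. -/
lemma ip_sq_le {S : Type*} (lam : S → ℝ) (hlam : ∀ i, 0 < lam i) (g h : S → ℝ)
    (hg : (Function.support g).Finite) (hh : (Function.support h).Finite) :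
    (ip lam g h) ^ 2 ≤ ip lam g g * ip lam h h := by
  classical
  have hU : (Function.support g ∪ Function.support h).Finite := hg.union hh
  set s := hU.toFinset with hsdef
  have hgz : ∀ i ∉ s, g i = 0 := by
    intro i hi
    simp only [hsdef, Set.Finite.mem_toFinset, Set.mem_union, Function.mem_support,
      not_or, not_not] at hi
    exact hi.1
  have hhz : ∀ i ∉ s, h i = 0 := by
    intro i hi
    simp only [hsdef, Set.Finite.mem_toFinset, Set.mem_union, Function.mem_support,
      not_or, not_not] at hi
    exact hi.2
  rw [ip_eq_sum lam g h s (fun i hi => Or.inl (hgz i hi)),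
      ip_eq_sum lam g g s (fun i hi => Or.inl (hgz i hi)),
      ip_eq_sum lam h h s (fun i hi => Or.inl (hhz i hi))]
  have key := Finset.sum_mul_sq_le_sq_mul_sq s (fun i => g i * Real.sqrt (lam i))
    (fun i => h i * Real.sqrt (lam i))
  have k1 : ∑ i ∈ s, (g i * Real.sqrt (lam i)) * (h i * Real.sqrt (lam i))
      = ∑ i ∈ s, g i * h i * lam i := by
    refine Finset.sum_congr rfl fun i _ => ?_
    rw [show g i * Real.sqrt (lam i) * (h i * Real.sqrt (lam i))
        = g i * h i * (Real.sqrt (lam i) * Real.sqrt (lam i)) from by ring,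
      Real.mul_self_sqrt (hlam i).le]
  have k2 : ∑ i ∈ s, (g i * Real.sqrt (lam i)) ^ 2 = ∑ i ∈ s, g i * g i * lam i := by
    refine Finset.sum_congr rfl fun i _ => ?_
    rw [mul_pow, Real.sq_sqrt (hlam i).le]; ring
  have k3 : ∑ i ∈ s, (h i * Real.sqrt (lam i)) ^ 2 = ∑ i ∈ s, h i * h i * lam i := by
    refine Finset.sum_congr rfl fun i _ => ?_
    rw [mul_pow, Real.sq_sqrt (hlam i).le]; ring
  rw [k1, k2, k3] at key
  exact key

/-- `Qop` is an `L²(lam)` contraction on finitely supported functions. -/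
lemma ip_Qop_self_le {S : Type*} (q : S → S → ℝ) (lam : S → ℝ)
    (hq0 : ∀ i j, 0 ≤ q i j) (hq1 : ∀ i, HasSum (fun j => q i j) 1)
    (hlam : ∀ i, 0 < lam i) (hrev : ∀ i j, lam i * q i j = lam j * q j i)
    (g : S → ℝ) (hg : (Function.support g).Finite)
    (hQg : (Function.support (Qop q g)).Finite) :
    ip lam (Qop q g) (Qop q g) ≤ ip lam g g := by
  classical
  set s := hg.toFinset with hs
  set t := hQg.toFinset with ht
  have hgz : ∀ j ∉ s, g j = 0 := supp_zero hg
  have hQz : ∀ i ∉ t, Qop q g i = 0 := supp_zero hQg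
  rw [ip_eq_sum lam _ _ t (fun i hi => Or.inl (hQz i hi)),
      ip_eq_sum lam g g s (fun i hi => Or.inl (hgz i hi))]
  have hrow : ∀ (i : S) (u : Finset S), ∑ j ∈ u, q i j ≤ 1 := by
    intro i u
    have h := Summable.sum_le_tsum u (fun j _ => hq0 i j) (hq1 i).summable
    rwa [(hq1 i).tsum_eq] at h
  have hpt : ∀ i : S, Qop q g i * Qop q g i ≤ ∑ j ∈ s, q i j * (g j * g j) := by
    intro i
    have hQi : Qop q g i = ∑ j ∈ s, q i j * g j := Qop_eq_sum q g s hgz i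
    have cs := Finset.sum_mul_sq_le_sq_mul_sq s (fun j => Real.sqrt (q i j))
      (fun j => Real.sqrt (q i j) * g j)
    have e1 : ∑ j ∈ s, Real.sqrt (q i j) * (Real.sqrt (q i j) * g j)
        = ∑ j ∈ s, q i j * g j :=
      Finset.sum_congr rfl fun j _ => by
        rw [← mul_assoc, Real.mul_self_sqrt (hq0 i j)]
    have e2 : ∑ j ∈ s, Real.sqrt (q i j) ^ 2 = ∑ j ∈ s, q i j :=
      Finset.sum_congr rfl fun j _ => Real.sq_sqrt (hq0 i j)
    have e3 : ∑ j ∈ s, (Real.sqrt (q i j) * g j) ^ 2 = ∑ j ∈ s, q i j * (g j * g j) :=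
      Finset.sum_congr rfl fun j _ => by rw [mul_pow, Real.sq_sqrt (hq0 i j)]; ring
    rw [e1, e2, e3] at cs
    have hnn : 0 ≤ ∑ j ∈ s, q i j * (g j * g j) :=
      Finset.sum_nonneg fun j _ => mul_nonneg (hq0 i j) (mul_self_nonneg _)
    have h2 : (∑ j ∈ s, q i j * g j) ^ 2 ≤ ∑ j ∈ s, q i j * (g j * g j) := by
      refine cs.trans ?_
      nlinarith [hrow i s, hnn]
    calc Qop q g i * Qop q g i = (∑ j ∈ s, q i j * g j) ^ 2 := by rw [hQi]; ring
      _ ≤ _ := h2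
  have hcol : ∀ j : S, ∑ i ∈ t, q i j * lam i ≤ lam j := by
    intro j
    calc ∑ i ∈ t, q i j * lam i = lam j * ∑ i ∈ t, q j i := by
          rw [Finset.mul_sum]
          exact Finset.sum_congr rfl fun i _ => by rw [mul_comm]; exact hrev i j
      _ ≤ lam j * 1 := mul_le_mul_of_nonneg_left (hrow j t) (hlam j).le
      _ = lam j := mul_one _
  calc ∑ i ∈ t, Qop q g i * Qop q g i * lam i
      ≤ ∑ i ∈ t, (∑ j ∈ s, q i j * (g j * g j)) * lam i :=
        Finset.sum_le_sum fun i _ => mul_le_mul_of_nonneg_right (hpt i) (hlam i).le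
    _ = ∑ j ∈ s, (g j * g j) * (∑ i ∈ t, q i j * lam i) := by
        simp only [Finset.sum_mul, Finset.mul_sum]
        rw [Finset.sum_comm]
        exact Finset.sum_congr rfl fun j _ => Finset.sum_congr rfl fun i _ => by ring
    _ ≤ ∑ j ∈ s, (g j * g j) * lam j :=
        Finset.sum_le_sum fun j _ => mul_le_mul_of_nonneg_left (hcol j) (mul_self_nonneg _)
    _ = ∑ j ∈ s, g j * g j * lam j := rfl

/-- The scalar inequality `r^n (1-r) ≤ n^n / (n+1)^(n+1)` on `[0,1]`, by AM-GM. -/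
lemma key_scalar (n : ℕ) (r : ℝ) (hr0 : 0 ≤ r) (hr1 : r ≤ 1) :
    r ^ n * (1 - r) ≤ (n : ℝ) ^ n / ((n : ℝ) + 1) ^ (n + 1) := by
  rcases Nat.eq_zero_or_pos n with hn | hn
  · subst hn; norm_num; linarith
  · have hN : (0 : ℝ) < (n : ℝ) := by exact_mod_cast hn
    have hN1 : (0 : ℝ) < (n : ℝ) + 1 := by positivity
    have hp1 : (0 : ℝ) ≤ r * ((n : ℝ) + 1) / n := by positivity
    have hp2 : (0 : ℝ) ≤ (1 - r) * ((n : ℝ) + 1) :=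
      mul_nonneg (by linarith) hN1.le
    have hkey : (r * ((n : ℝ) + 1) / n) ^ ((n : ℝ) / ((n : ℝ) + 1))
        * ((1 - r) * ((n : ℝ) + 1)) ^ ((1 : ℝ) / ((n : ℝ) + 1)) ≤ 1 := by
      have h := Real.geom_mean_le_arith_mean2_weighted
        (w₁ := (n : ℝ) / ((n : ℝ) + 1)) (w₂ := (1 : ℝ) / ((n : ℝ) + 1))
        (p₁ := r * ((n : ℝ) + 1) / n) (p₂ := (1 - r) * ((n : ℝ) + 1))
        (by positivity) (by positivity) hp1 hp2 (by field_simp)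
      refine h.trans_eq ?_
      field_simp
      ring
    have hx : (0 : ℝ) ≤ (r * ((n : ℝ) + 1) / n) ^ ((n : ℝ) / ((n : ℝ) + 1))
        * ((1 - r) * ((n : ℝ) + 1)) ^ ((1 : ℝ) / ((n : ℝ) + 1)) := by positivity
    have h3 := pow_le_one₀ hx hkey (n := n + 1)
    have h4 : ((r * ((n : ℝ) + 1) / n) ^ ((n : ℝ) / ((n : ℝ) + 1))
        * ((1 - r) * ((n : ℝ) + 1)) ^ ((1 : ℝ) / ((n : ℝ) + 1))) ^ (n + 1)
        = (r * ((n : ℝ) + 1) / n) ^ n * ((1 - r) * ((n : ℝ) + 1)) := by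
      rw [mul_pow, ← Real.rpow_natCast ((r * ((n : ℝ) + 1) / n) ^ ((n : ℝ) / ((n : ℝ) + 1))) (n + 1),
        ← Real.rpow_natCast (((1 - r) * ((n : ℝ) + 1)) ^ ((1 : ℝ) / ((n : ℝ) + 1))) (n + 1),
        ← Real.rpow_mul hp1, ← Real.rpow_mul hp2]
      push_cast
      rw [show (n : ℝ) / ((n : ℝ) + 1) * ((n : ℝ) + 1) = (n : ℝ) by field_simp,
        show (1 : ℝ) / ((n : ℝ) + 1) * ((n : ℝ) + 1) = 1 by field_simp,
        Real.rpow_natCast, Real.rpow_one]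
    rw [h4] at h3
    rw [le_div_iff₀ (by positivity)]
    have h5 := mul_le_mul_of_nonneg_left h3 (le_of_lt (pow_pos hN n))
    calc r ^ n * (1 - r) * ((n : ℝ) + 1) ^ (n + 1)
        = (n : ℝ) ^ n * ((r * ((n : ℝ) + 1) / n) ^ n * ((1 - r) * ((n : ℝ) + 1))) := by
          rw [div_pow, mul_pow]
          field_simp
          ring
      _ ≤ (n : ℝ) ^ n * 1 := h5
      _ = (n : ℝ) ^ n := mul_one _

/-- The abstract Nash argument for a nonnegative, nonincreasing, log-convex sequence. -/
lemma abstract_nash (a : ℕ → ℝ) (ha0 : ∀ k, 0 ≤ a k)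
    (hmono1 : ∀ k, a (k + 1) ≤ a k)
    (hlog : ∀ k, a (k + 1) ^ 2 ≤ a k * a (k + 2)) (n : ℕ) :
    a (2 * n) - a (2 * n + 1) ≤ ((n : ℝ) ^ n / ((n : ℝ) + 1) ^ (n + 1)) * a n := by
  have hmono : ∀ j k, j ≤ k → a k ≤ a j := by
    intro j k h
    induction h with
    | refl => exact le_rfl
    | step _ ih => exact le_trans (hmono1 _) ih
  -- one-gap log-convexity interpolation
  have hF : ∀ m j, a (j + 1) * a (j + m + 1) ≤ a j * a (j + m + 2) := by
    intro m
    induction m with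
    | zero =>
      intro j
      have h := hlog j
      nlinarith [h]
    | succ m ih =>
      intro j
      rcases (ha0 (j + 1)).eq_or_lt with h1 | h1
      · rw [show j + (m + 1) + 1 = j + m + 2 from by omega, ← h1, zero_mul]
        exact mul_nonneg (ha0 j) (ha0 _)
      rcases (ha0 (j + 2)).eq_or_lt with h2 | h2
      · have hz : a (j + (m + 1) + 1) = 0 := by
          refine le_antisymm ?_ (ha0 _)
          have := hmono (j + 2) (j + (m + 1) + 1) (by omega)
          linarith [this]
        rw [hz, mul_zero]
        exact mul_nonneg (ha0 j) (ha0 _)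
      · have ih' := ih (j + 1)
        rw [show j + 1 + m + 1 = j + m + 2 from by omega,
          show j + 1 + m + 2 = j + m + 3 from by omega] at ih'
        rw [show j + (m + 1) + 1 = j + m + 2 from by omega,
          show j + (m + 1) + 2 = j + m + 3 from by omega]
        have h3 := mul_le_mul_of_nonneg_left ih' (ha0 (j + 1))
        have h4 := mul_le_mul_of_nonneg_right (hlog j) (ha0 (j + m + 3))
        have t1 : a (j + 2) * (a (j + 1) * a (j + m + 2))
            ≤ a (j + 2) * (a j * a (j + m + 3)) := by nlinarith [h3, h4]
        exact le_of_mul_le_mul_left t1 h2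
  -- iterated: a(2n)^(m+1) ≤ a(2n-m) * a(2n+1)^m
  have hC : ∀ m, m ≤ n → a (2 * n) ^ (m + 1) ≤ a (2 * n - m) * a (2 * n + 1) ^ m := by
    intro m
    induction m with
    | zero => intro _; simp
    | succ m ih =>
      intro hm
      have h1 := ih (by omega)
      have hFi := hF m (2 * n - (m + 1))
      rw [show 2 * n - (m + 1) + 1 = 2 * n - m from by omega,
        show 2 * n - (m + 1) + m + 1 = 2 * n from by omega,
        show 2 * n - (m + 1) + m + 2 = 2 * n + 1 from by omega] at hFi
      calc a (2 * n) ^ (m + 1 + 1) = a (2 * n) ^ (m + 1) * a (2 * n) := by ring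
        _ ≤ (a (2 * n - m) * a (2 * n + 1) ^ m) * a (2 * n) :=
            mul_le_mul_of_nonneg_right h1 (ha0 _)
        _ = (a (2 * n - m) * a (2 * n)) * a (2 * n + 1) ^ m := by ring
        _ ≤ (a (2 * n - (m + 1)) * a (2 * n + 1)) * a (2 * n + 1) ^ m :=
            mul_le_mul_of_nonneg_right hFi (pow_nonneg (ha0 _) m)
        _ = a (2 * n - (m + 1)) * a (2 * n + 1) ^ (m + 1) := by ring
  have P := hC n le_rfl
  rw [show 2 * n - n = n from by omega] at P
  rcases (ha0 (2 * n)).eq_or_lt with hA | hA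
  · have hB : a (2 * n + 1) = 0 :=
      le_antisymm (by linarith [hmono1 (2 * n)]) (ha0 _)
    rw [← hA, hB]
    have : (0:ℝ) ≤ ((n : ℝ) ^ n / ((n : ℝ) + 1) ^ (n + 1)) * a n := by
      apply mul_nonneg _ (ha0 n); positivity
    linarith
  · set A := a (2 * n) with hAdef
    set B := a (2 * n + 1) with hBdef
    set N := a n with hNdef
    have hBA : B ≤ A := hmono1 (2 * n)
    have hB0 : 0 ≤ B := ha0 _
    have hN0 : 0 ≤ N := ha0 _
    set r : ℝ := B / A with hrdef
    have hr0 : 0 ≤ r := div_nonneg hB0 hA.le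
    have hr1 : r ≤ 1 := (div_le_one hA).mpr hBA
    have hBr : B = r * A := by
      rw [hrdef, div_mul_cancel₀ B hA.ne']
    have h5 : A ^ (n + 1) ≤ (N * r ^ n) * A ^ n := by
      calc A ^ (n + 1) ≤ N * B ^ n := P
        _ = N * (r * A) ^ n := by rw [← hBr]
        _ = (N * r ^ n) * A ^ n := by rw [mul_pow]; ring
    have hAle : A ≤ N * r ^ n := by
      have h6 : A ^ n * A ≤ A ^ n * (N * r ^ n) := by
        rw [← pow_succ]
        nlinarith [h5]
      exact le_of_mul_le_mul_left h6 (pow_pos hA n)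
    have h7 := key_scalar n r hr0 hr1
    have h8 : A * (1 - r) ≤ (N * r ^ n) * (1 - r) :=
      mul_le_mul_of_nonneg_right hAle (by linarith)
    have h9 : N * (r ^ n * (1 - r)) ≤ N * ((n : ℝ) ^ n / ((n : ℝ) + 1) ^ (n + 1)) :=
      mul_le_mul_of_nonneg_left h7 hN0
    rw [hBr]
    nlinarith [h8, h9]

theorem energy_decay_nash {S : Type*} [Countable S]
    (q : S → S → ℝ) (lam : S → ℝ)
    (hq0 : ∀ i j, 0 ≤ q i j)
    (hq1 : ∀ i, HasSum (fun j => q i j) 1)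
    (hlam : ∀ i, 0 < lam i)
    (hrev : ∀ i j, lam i * q i j = lam j * q j i)
    (hQfin : ∀ f : S → ℝ, (Function.support f).Finite →
      (Function.support (Qop q f)).Finite)
    (f : S → ℝ) (hf : (Function.support f).Finite) :
    ∀ n : ℕ,
      ip lam ((Qop q)^[2 * n] f) ((Qop q)^[2 * n] f)
        - ip lam ((Qop q)^[2 * n + 1] f) ((Qop q)^[2 * n + 1] f)
      ≤ ((n : ℝ) ^ n / (n + 1) ^ (n + 1)) * ip lam ((Qop q)^[n] f) ((Qop q)^[n] f) := by
  intro n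
  have hfin : ∀ k, (Function.support ((Qop q)^[k] f)).Finite := by
    intro k
    induction k with
    | zero => simpa using hf
    | succ k ih => rw [Function.iterate_succ_apply']; exact hQfin _ ih
  have e1 : ∀ k, (Qop q)^[k + 1] f = Qop q ((Qop q)^[k] f) := fun k =>
    Function.iterate_succ_apply' _ _ _
  refine abstract_nash (fun k => ip lam ((Qop q)^[k] f) ((Qop q)^[k] f))
    (fun k => ip_nonneg lam hlam _) (fun k => ?_) (fun k => ?_) n
  · show ip lam ((Qop q)^[k + 1] f) ((Qop q)^[k + 1] f)
      ≤ ip lam ((Qop q)^[k] f) ((Qop q)^[k] f)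
    rw [e1 k]
    exact ip_Qop_self_le q lam hq0 hq1 hlam hrev _ (hfin k)
      (by rw [← e1 k]; exact hfin (k + 1))
  · show ip lam ((Qop q)^[k + 1] f) ((Qop q)^[k + 1] f) ^ 2
      ≤ ip lam ((Qop q)^[k] f) ((Qop q)^[k] f)
        * ip lam ((Qop q)^[k + 2] f) ((Qop q)^[k + 2] f)
    have e2 : (Qop q)^[k + 2] f = Qop q ((Qop q)^[k + 1] f) :=
      Function.iterate_succ_apply' _ _ _
    have hadj : ip lam ((Qop q)^[k + 1] f) ((Qop q)^[k + 1] f)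
        = ip lam ((Qop q)^[k] f) ((Qop q)^[k + 2] f) := by
      have h := ip_Qop_comm q lam hrev ((Qop q)^[k] f) ((Qop q)^[k + 1] f)
        (hfin k) (hfin (k + 1))
      rw [← e1 k, ← e2] at h
      exact h
    rw [hadj]
    exact ip_sq_le lam hlam _ _ (hfin k) (hfin (k + 2))
end

section
/- For the nearest-neighbour random walk on ℤ with conductances c(x,x+1) > 0 and transition probabilities p(x,x±1) = c(x,x±1)/c̄(x) where c̄(x) = c(x−1,x)+c(x,x+1), the Dirichlet form associated with P² and the measure (c̄(x)) satisfies, for all finitely supported f,g: E(f,g) = Σ_{x∈ℤ} (f(x−1)−f(x+1))(g(x−1)−g(x+1)) · c(x−1,x)c(x,x+1)/c̄(x). -/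
open scoped BigOperators

/-- `cbar κ x = c(x−1,x) + c(x,x+1)`, where `κ x` denotes the conductance of
the edge `{x, x+1}` of `ℤ`. -/
noncomputable def cbar (κ : ℤ → ℝ) (x : ℤ) : ℝ := κ (x - 1) + κ x

/-- One-step transition probabilities of the nearest-neighbour conductance walk. -/
noncomputable def step (κ : ℤ → ℝ) (x y : ℤ) : ℝ :=
  if y = x + 1 then κ x / cbar κ x
  else if y = x - 1 then κ (x - 1) / cbar κ x else 0

theorem dirichlet_form_conductance_walk (κ : ℤ → ℝ) (hκ : ∀ x, 0 < κ x)
    (f g : ℤ → ℝ)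
    (hf : (Function.support f).Finite) (hg : (Function.support g).Finite) :
    ((1 : ℝ)/2) * ∑' p : ℤ × ℤ,
        (f p.1 - f p.2) * (g p.1 - g p.2) * (∑' z, step κ p.1 z * step κ z p.2)
          * cbar κ p.1
      = ∑' x : ℤ,
          (f (x - 1) - f (x + 1)) * (g (x - 1) - g (x + 1))
            * (κ (x - 1) * κ x / cbar κ x) := by
  have hc : ∀ x, (0:ℝ) < cbar κ x := fun x => add_pos (hκ _) (hκ _)
  have hc' : ∀ x, cbar κ x ≠ 0 := fun x => (hc x).ne'
  set a : ℤ → ℝ := fun x =>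
    (f x - f (x+2)) * (g x - g (x+2)) * (κ x * κ (x+1) / cbar κ (x+1)) with ha
  set b : ℤ → ℝ := fun x =>
    (f x - f (x-2)) * (g x - g (x-2)) * (κ (x-2) * κ (x-1) / cbar κ (x-1)) with hb
  -- the two-step kernel
  have hker : ∀ x y : ℤ, (∑' z, step κ x z * step κ z y)
      = step κ x (x-1) * step κ (x-1) y + step κ x (x+1) * step κ (x+1) y := by
    intro x y
    rw [tsum_eq_sum (s := ({x-1, x+1} : Finset ℤ)) ?_]
    · rw [Finset.sum_pair (by omega)]
    · intro z hz
      simp only [Finset.mem_insert, Finset.mem_singleton, not_or] at hz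
      have : step κ x z = 0 := by
        simp [step, show z ≠ x + 1 from hz.2, show z ≠ x - 1 from hz.1]
      simp [this]
  -- pointwise identity for the summand
  have key : ∀ x y : ℤ,
      (f x - f y) * (g x - g y) * (∑' z, step κ x z * step κ z y) * cbar κ x
      = (if y = x+2 then a x else 0) + (if y = x-2 then b x else 0) := by
    intro x y
    rw [hker x y]
    by_cases h2 : y = x + 2
    · subst h2
      have e1 : step κ (x-1) (x+2) = 0 := by
        simp [step, show (x:ℤ)+2 ≠ (x-1)+1 by omega, show (x:ℤ)+2 ≠ (x-1)-1 by omega]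
      have e2 : step κ x (x+1) = κ x / cbar κ x := by simp [step]
      have e3 : step κ (x+1) (x+2) = κ (x+1) / cbar κ (x+1) := by
        rw [show (x:ℤ)+2 = (x+1)+1 by ring]; simp [step]
      rw [e1, e2, e3, if_pos rfl, if_neg (by omega)]
      have h1 := hc' x
      have h2 := hc' (x+1)
      simp only [ha]
      field_simp
      ring
    · by_cases h2' : y = x - 2
      · subst h2'
        have e1 : step κ (x+1) (x-2) = 0 := by
          simp [step, show (x:ℤ)-2 ≠ (x+1)+1 by omega, show (x:ℤ)-2 ≠ (x+1)-1 by omega]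
        have e2 : step κ x (x-1) = κ (x-1) / cbar κ x := by
          simp [step, show (x:ℤ)-1 ≠ x+1 by omega]
        have e3 : step κ (x-1) (x-2) = κ (x-2) / cbar κ (x-1) := by
          simp only [step]
          rw [if_neg (by omega), if_pos (by ring), show (x:ℤ)-1-1 = x-2 by ring]
        rw [e1, e2, e3, if_pos rfl, if_neg (by omega)]
        have h1 := hc' x
        have h2 := hc' (x-1)
        simp only [hb]
        field_simp
        ring
      · rw [if_neg h2, if_neg h2']
        by_cases h0 : y = x
        · subst h0; simp
        · have e1 : step κ (x-1) y = 0 := by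
            simp only [step]
            rw [if_neg (by omega), if_neg (by omega)]
          have e2 : step κ (x+1) y = 0 := by
            simp only [step]
            rw [if_neg (by omega), if_neg (by omega)]
          rw [e1, e2]; ring
  -- finite supports
  have hsa : (Function.support a).Finite := by
    apply Set.Finite.subset (hf.union (hf.preimage
      (Set.injOn_of_injective (add_left_injective (2:ℤ)))))
    intro x hx
    by_contra hmem
    simp only [Set.mem_union, Set.mem_preimage, Function.mem_support, not_or, not_not] at hmem
    apply hx
    simp only [ha, hmem.1, hmem.2, sub_zero, zero_mul]
  have hsb : (Function.support b).Finite := by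
    apply Set.Finite.subset (hf.union (hf.preimage
      (Set.injOn_of_injective (fun u v (h : u - 2 = v - 2) => by omega))))
    intro x hx
    by_contra hmem
    simp only [Set.mem_union, Set.mem_preimage, Function.mem_support, not_or, not_not] at hmem
    apply hx
    simp only [hb, hmem.1, hmem.2, sub_zero, zero_mul]
  set F1 : ℤ × ℤ → ℝ := fun p => if p.2 = p.1 + 2 then a p.1 else 0 with hF1
  set F2 : ℤ × ℤ → ℝ := fun p => if p.2 = p.1 - 2 then b p.1 else 0 with hF2
  have hF1supp : Function.support F1 ⊆ Set.range (fun x : ℤ => (x, x + 2)) := by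
    rintro ⟨u, v⟩ hp
    simp only [hF1, Function.mem_support] at hp
    by_cases h : v = u + 2
    · subst h; exact ⟨u, rfl⟩
    · exact absurd (if_neg h) hp
  have hF2supp : Function.support F2 ⊆ Set.range (fun x : ℤ => (x, x - 2)) := by
    rintro ⟨u, v⟩ hp
    simp only [hF2, Function.mem_support] at hp
    by_cases h : v = u - 2
    · subst h; exact ⟨u, rfl⟩
    · exact absurd (if_neg h) hp
  have hinj1 : Function.Injective (fun x : ℤ => (x, x + 2)) := fun u v h => by
    simpa using congrArg Prod.fst h
  have hinj2 : Function.Injective (fun x : ℤ => (x, x - 2)) := fun u v h => by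
    simpa using congrArg Prod.fst h
  have hF1s : Summable F1 := by
    apply summable_of_ne_finset_zero (s := ((hsa.image (fun x => (x, x + 2)))).toFinset)
    intro p hp
    by_contra hne
    apply hp
    rw [Set.Finite.mem_toFinset]
    rcases hF1supp hne with ⟨x, hx⟩
    refine ⟨x, ?_, hx⟩
    simp only [Function.mem_support]
    intro hax
    apply hne
    rw [← hx]
    simp [hF1, hax]
  have hF2s : Summable F2 := by
    apply summable_of_ne_finset_zero (s := ((hsb.image (fun x => (x, x - 2)))).toFinset)
    intro p hp
    by_contra hne
    apply hp
    rw [Set.Finite.mem_toFinset]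
    rcases hF2supp hne with ⟨x, hx⟩
    refine ⟨x, ?_, hx⟩
    simp only [Function.mem_support]
    intro hax
    apply hne
    rw [← hx]
    simp [hF2, hax]
  have t1 : ∑' p : ℤ × ℤ, F1 p = ∑' x : ℤ, a x := by
    rw [← hinj1.tsum_eq hF1supp]
    exact tsum_congr fun x => by simp [hF1]
  have t2 : ∑' p : ℤ × ℤ, F2 p = ∑' x : ℤ, b x := by
    rw [← hinj2.tsum_eq hF2supp]
    exact tsum_congr fun x => by simp [hF2]
  have ra : ∑' x : ℤ, a x
      = ∑' x : ℤ, (f (x - 1) - f (x + 1)) * (g (x - 1) - g (x + 1))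
          * (κ (x - 1) * κ x / cbar κ x) := by
    rw [← (Equiv.subRight (1:ℤ)).tsum_eq a]
    exact tsum_congr fun x => by
      simp only [Equiv.subRight_apply, ha]
      rw [show (x:ℤ) - 1 + 2 = x + 1 by ring, show (x:ℤ) - 1 + 1 = x by ring]
  have rb : ∑' x : ℤ, b x
      = ∑' x : ℤ, (f (x - 1) - f (x + 1)) * (g (x - 1) - g (x + 1))
          * (κ (x - 1) * κ x / cbar κ x) := by
    rw [← (Equiv.addRight (1:ℤ)).tsum_eq b]
    exact tsum_congr fun x => by
      simp only [Equiv.coe_addRight, hb]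
      rw [show (x:ℤ) + 1 - 2 = x - 1 by ring, show (x:ℤ) + 1 - 1 = x by ring]
      ring
  calc ((1 : ℝ)/2) * ∑' p : ℤ × ℤ,
        (f p.1 - f p.2) * (g p.1 - g p.2) * (∑' z, step κ p.1 z * step κ z p.2)
          * cbar κ p.1
      = ((1 : ℝ)/2) * ∑' p : ℤ × ℤ, (F1 p + F2 p) := by
        congr 1
        exact tsum_congr fun p => key p.1 p.2
    _ = ((1 : ℝ)/2) * (∑' p, F1 p + ∑' p, F2 p) := by rw [Summable.tsum_add hF1s hF2s]
    _ = ∑' x : ℤ,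
          (f (x - 1) - f (x + 1)) * (g (x - 1) - g (x + 1))
            * (κ (x - 1) * κ x / cbar κ x) := by
        rw [t1, t2, ra, rb]; ring
end

section
/- For the nearest-neighbour random walk on ℤ with positive conductances, started at 0, with heat kernel h_n(x) = P_0[S_n=x]/c̄(x): for all integers n ≥ 1 and K ≥ 1, ‖h_n‖² − 1/(Σ_{x∈B(0,K)∩2ℤ} c̄(x)) ≤ √(‖h_{2n}‖² − ‖h_{2n+1}‖²) · (Σ_{x=−K}^{K−1} 1/c(x,x+1))^{1/2}. -/
open scoped BigOperators

/-- `walk κ n x y = P_x[S_n = y]`, the `n`-step transition probabilities. -/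
noncomputable def walk (κ : ℤ → ℝ) : ℕ → ℤ → ℤ → ℝ
  | 0, x, y => if y = x then 1 else 0
  | (n+1), x, y =>
      walk κ n x (y - 1) * step κ (y - 1) y + walk κ n x (y + 1) * step κ (y + 1) y

/-- The heat kernel `h_n(x) = P_0[S_n = x] / c̄(x)`. -/
noncomputable def heatK (κ : ℤ → ℝ) (n : ℕ) (x : ℤ) : ℝ := walk κ n 0 x / cbar κ x

/-- The energy `‖h_n‖² = Σ_x h_n(x)² c̄(x)`. -/
noncomputable def energy (κ : ℤ → ℝ) (n : ℕ) : ℝ :=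
  ∑' x : ℤ, (heatK κ n x) ^ 2 * cbar κ x

section Aux
variable {κ : ℤ → ℝ}

lemma cbar_pos (hκ : ∀ x, 0 < κ x) (x : ℤ) : 0 < cbar κ x := add_pos (hκ _) (hκ _)

lemma cbar_ne (hκ : ∀ x, 0 < κ x) (x : ℤ) : cbar κ x ≠ 0 := (cbar_pos hκ x).ne'

lemma step_nonneg (hκ : ∀ x, 0 < κ x) (x y : ℤ) : 0 ≤ step κ x y := by
  unfold step
  split_ifs <;> first
    | exact div_nonneg (hκ _).le (cbar_pos hκ _).le
    | exact le_refl 0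

lemma step_from_left (y : ℤ) : step κ (y-1) y = κ (y-1) / cbar κ (y-1) := by
  rw [step, if_pos (by ring)]

lemma step_from_right (y : ℤ) : step κ (y+1) y = κ y / cbar κ (y+1) := by
  rw [step, if_neg (by omega), if_pos (by ring)]
  norm_num

lemma step_up (x : ℤ) : step κ x (x+1) = κ x / cbar κ x := by
  rw [step, if_pos rfl]

lemma step_down (x : ℤ) : step κ x (x-1) = κ (x-1) / cbar κ x := by
  rw [step, if_neg (by omega), if_pos rfl]

lemma walk_nonneg (hκ : ∀ x, 0 < κ x) (n : ℕ) (x y : ℤ) : 0 ≤ walk κ n x y := by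
  induction n generalizing y with
  | zero => rw [walk]; split <;> norm_num
  | succ n ih =>
    rw [walk]
    exact add_nonneg (mul_nonneg (ih _) (step_nonneg hκ _ _))
      (mul_nonneg (ih _) (step_nonneg hκ _ _))

lemma walk_zero_of_far (n : ℕ) (x y : ℤ) (h : (n:ℤ) < |y - x|) : walk κ n x y = 0 := by
  induction n generalizing y with
  | zero =>
    rw [walk, if_neg]
    intro he; subst he; simp at h
  | succ n ih =>
    rw [lt_abs] at h
    rw [walk, ih (y-1) (by rw [lt_abs]; push_cast at h ⊢; omega),
      ih (y+1) (by rw [lt_abs]; push_cast at h ⊢; omega)]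
    ring

lemma walk_parity (n : ℕ) (x : ℤ) (h : ¬ Even (x + n)) : walk κ n 0 x = 0 := by
  induction n generalizing x with
  | zero =>
    rw [walk, if_neg]
    intro he; subst he; simp at h
  | succ n ih =>
    rw [Int.even_iff] at h
    rw [walk, ih (x-1) (by rw [Int.even_iff]; push_cast at h ⊢; omega),
      ih (x+1) (by rw [Int.even_iff]; push_cast at h ⊢; omega)]
    ring


lemma summable_of_bound {f : ℤ → ℝ} (a : ℤ) (m : ℕ) (h : ∀ x, (m:ℤ) < |x - a| → f x = 0) :
    Summable f := by
  apply summable_of_ne_finset_zero (s := Finset.Icc (a - m) (a + m))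
  intro x hx
  apply h
  rw [Finset.mem_Icc] at hx
  rw [lt_abs]; omega

lemma walk_succ_front (n : ℕ) (x y : ℤ) :
    walk κ (n+1) x y
      = step κ x (x+1) * walk κ n (x+1) y + step κ x (x-1) * walk κ n (x-1) y := by
  induction n generalizing y with
  | zero =>
    show walk κ 0 x (y-1) * step κ (y-1) y + walk κ 0 x (y+1) * step κ (y+1) y = _
    rw [walk, walk, walk, walk]
    by_cases h1 : y = x + 1
    · subst h1
      rw [if_pos (by ring), if_neg (by omega), if_pos (by ring), if_neg (by omega)]
      rw [show (x:ℤ) + 1 - 1 = x by ring]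
      ring
    · by_cases h2 : y = x - 1
      · subst h2
        rw [if_neg (by omega), if_pos (by ring), if_neg (by omega), if_pos (by ring)]
        rw [show (x:ℤ) - 1 + 1 = x by ring]
        ring
      · rw [if_neg (by omega), if_neg (by omega), if_neg (by omega), if_neg (by omega)]
        ring
  | succ n ih =>
    show walk κ (n+1) x (y-1) * step κ (y-1) y + walk κ (n+1) x (y+1) * step κ (y+1) y = _
    rw [ih (y-1), ih (y+1)]
    rw [show walk κ (n+1) (x+1) y
        = walk κ n (x+1) (y-1) * step κ (y-1) y + walk κ n (x+1) (y+1) * step κ (y+1) y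
        from rfl,
      show walk κ (n+1) (x-1) y
        = walk κ n (x-1) (y-1) * step κ (y-1) y + walk κ n (x-1) (y+1) * step κ (y+1) y
        from rfl]
    ring

lemma walk_rev (hκ : ∀ x, 0 < κ x) (n : ℕ) (x y : ℤ) :
    cbar κ x * walk κ n x y = cbar κ y * walk κ n y x := by
  induction n generalizing x y with
  | zero =>
    rw [walk, walk]
    by_cases h : y = x
    · subst h; rfl
    · rw [if_neg h, if_neg (fun hx => h hx.symm)]; ring
  | succ n ih =>
    have h1 : cbar κ (y-1) ≠ 0 := cbar_ne hκ _
    have h2 : cbar κ (y+1) ≠ 0 := cbar_ne hκ _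
    have h3 : cbar κ y ≠ 0 := cbar_ne hκ _
    calc cbar κ x * walk κ (n+1) x y
        = (cbar κ x * walk κ n x (y-1)) * (κ (y-1) / cbar κ (y-1))
          + (cbar κ x * walk κ n x (y+1)) * (κ y / cbar κ (y+1)) := by
          show cbar κ x * (walk κ n x (y-1) * step κ (y-1) y
            + walk κ n x (y+1) * step κ (y+1) y) = _
          rw [step_from_left, step_from_right]; ring
      _ = (cbar κ (y-1) * walk κ n (y-1) x) * (κ (y-1) / cbar κ (y-1))
          + (cbar κ (y+1) * walk κ n (y+1) x) * (κ y / cbar κ (y+1)) := by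
          rw [ih x (y-1), ih x (y+1)]
      _ = κ (y-1) * walk κ n (y-1) x + κ y * walk κ n (y+1) x := by
          field_simp
      _ = cbar κ y * walk κ (n+1) y x := by
          rw [walk_succ_front, step_up, step_down]
          field_simp; ring

lemma walk_total (hκ : ∀ x, 0 < κ x) (n : ℕ) (a : ℤ) : ∑' y, walk κ n a y = 1 := by
  induction n generalizing a with
  | zero =>
    show ∑' y, (if y = a then (1:ℝ) else 0) = 1
    exact tsum_ite_eq a 1
  | succ n ih =>
    have S1 : Summable (fun y => walk κ n a (y-1) * step κ (y-1) y) := by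
      apply summable_of_bound a (n+1)
      intro y hy
      rw [walk_zero_of_far n a (y-1) (by rw [lt_abs] at hy ⊢; push_cast at hy ⊢; omega)]
      ring
    have S2 : Summable (fun y => walk κ n a (y+1) * step κ (y+1) y) := by
      apply summable_of_bound a (n+1)
      intro y hy
      rw [walk_zero_of_far n a (y+1) (by rw [lt_abs] at hy ⊢; push_cast at hy ⊢; omega)]
      ring
    show ∑' y, (walk κ n a (y-1) * step κ (y-1) y + walk κ n a (y+1) * step κ (y+1) y) = 1
    rw [Summable.tsum_add S1 S2]
    have e1 : ∑' y, walk κ n a (y-1) * step κ (y-1) y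
        = ∑' z, walk κ n a z * (κ z / cbar κ z) := by
      have h := (Equiv.subRight (1:ℤ)).tsum_eq (f := fun z => walk κ n a z * (κ z / cbar κ z))
      simp only [Equiv.subRight_apply] at h
      rw [← h]
      exact tsum_congr fun y => by rw [step_from_left]
    have e2 : ∑' y, walk κ n a (y+1) * step κ (y+1) y
        = ∑' z, walk κ n a z * (κ (z-1) / cbar κ z) := by
      have h := (Equiv.addRight (1:ℤ)).tsum_eq (f := fun z => walk κ n a z * (κ (z-1) / cbar κ z))
      simp only [Equiv.coe_addRight] at h
      rw [← h]
      refine tsum_congr fun y => ?_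
      rw [step_from_right]
      norm_num
    have S3 : Summable (fun z => walk κ n a z * (κ z / cbar κ z)) := by
      apply summable_of_bound a n
      intro z hz; rw [walk_zero_of_far n a z hz]; ring
    have S4 : Summable (fun z => walk κ n a z * (κ (z-1) / cbar κ z)) := by
      apply summable_of_bound a n
      intro z hz; rw [walk_zero_of_far n a z hz]; ring
    rw [e1, e2, ← Summable.tsum_add S3 S4]
    have e3 : ∀ z, walk κ n a z * (κ z / cbar κ z) + walk κ n a z * (κ (z-1) / cbar κ z)
        = walk κ n a z := by
      intro z
      have hc : cbar κ z ≠ 0 := cbar_ne hκ z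
      rw [show cbar κ z = κ (z-1) + κ z from rfl] at hc ⊢
      field_simp
      ring
    rw [tsum_congr e3, ih a]


lemma walk_add (m m' : ℕ) (a b : ℤ) :
    walk κ (m + m') a b = ∑' x, walk κ m a x * walk κ m' x b := by
  induction m' generalizing b with
  | zero =>
    have key : ∀ x, walk κ m a x * walk κ 0 x b = if x = b then walk κ m a b else 0 := by
      intro x
      by_cases h : x = b
      · subst h; rw [walk, if_pos rfl, mul_one, if_pos rfl]
      · rw [walk, if_neg (fun hb => h hb.symm), mul_zero, if_neg h]
    rw [tsum_congr key, tsum_ite_eq b (fun _ => walk κ m a b)]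
    rfl
  | succ m' ih =>
    have S1 : Summable (fun x => walk κ m a x * (walk κ m' x (b-1) * step κ (b-1) b)) := by
      apply summable_of_bound a m
      intro x hx; rw [walk_zero_of_far m a x hx]; ring
    have S2 : Summable (fun x => walk κ m a x * (walk κ m' x (b+1) * step κ (b+1) b)) := by
      apply summable_of_bound a m
      intro x hx; rw [walk_zero_of_far m a x hx]; ring
    have key : ∀ x, walk κ m a x * walk κ (m'+1) x b
        = walk κ m a x * (walk κ m' x (b-1) * step κ (b-1) b)
          + walk κ m a x * (walk κ m' x (b+1) * step κ (b+1) b) := by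
      intro x
      show walk κ m a x * (walk κ m' x (b-1) * step κ (b-1) b
        + walk κ m' x (b+1) * step κ (b+1) b) = _
      ring
    show walk κ ((m + m') + 1) a b = _
    rw [show walk κ ((m + m') + 1) a b
      = walk κ (m+m') a (b-1) * step κ (b-1) b + walk κ (m+m') a (b+1) * step κ (b+1) b
      from rfl, ih (b-1), ih (b+1), tsum_congr key, Summable.tsum_add S1 S2,
      ← tsum_mul_right, ← tsum_mul_right]
    congr 1 <;> exact tsum_congr fun x => by ring

lemma heatK_nonneg (hκ : ∀ x, 0 < κ x) (m : ℕ) (x : ℤ) : 0 ≤ heatK κ m x :=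
  div_nonneg (walk_nonneg hκ m 0 x) (cbar_pos hκ x).le

lemma heatK_zero_of_far (m : ℕ) (x : ℤ) (h : (m:ℤ) < |x|) : heatK κ m x = 0 := by
  rw [heatK, walk_zero_of_far m 0 x (by rwa [sub_zero]), zero_div]

lemma heatK_parity (m : ℕ) (x : ℤ) (h : ¬ Even (x + m)) : heatK κ m x = 0 := by
  rw [heatK, walk_parity m x h, zero_div]

lemma inner_heat (hκ : ∀ x, 0 < κ x) (m m' : ℕ) :
    ∑' x, heatK κ m x * heatK κ m' x * cbar κ x = heatK κ (m + m') 0 := by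
  have key : ∀ x, heatK κ m x * heatK κ m' x * cbar κ x
      = (walk κ m 0 x * walk κ m' x 0) * (1 / cbar κ 0) := by
    intro x
    have hrev := walk_rev hκ m' 0 x
    have hx : cbar κ x ≠ 0 := cbar_ne hκ x
    have h0 : cbar κ 0 ≠ 0 := cbar_ne hκ 0
    rw [heatK, heatK]
    field_simp
    linear_combination walk κ m 0 x * hrev
  rw [tsum_congr key, tsum_mul_right, ← walk_add m m' 0 0, heatK, mul_one_div]

lemma energy_eq (hκ : ∀ x, 0 < κ x) (m : ℕ) : energy κ m = heatK κ (2*m) 0 := by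
  rw [energy, show 2*m = m + m by ring, ← inner_heat hκ m m]
  exact tsum_congr fun x => by ring

lemma heat_rec (hκ : ∀ x, 0 < κ x) (m : ℕ) (y : ℤ) :
    κ (y-1) * heatK κ m (y-1) + κ y * heatK κ m (y+1) = heatK κ (m+1) y * cbar κ y := by
  have h1 : cbar κ (y-1) ≠ 0 := cbar_ne hκ _
  have h2 : cbar κ (y+1) ≠ 0 := cbar_ne hκ _
  have h3 : cbar κ y ≠ 0 := cbar_ne hκ _
  rw [heatK, heatK, heatK,
    show walk κ (m+1) 0 y
      = walk κ m 0 (y-1) * step κ (y-1) y + walk κ m 0 (y+1) * step κ (y+1) y from rfl,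
    step_from_left, step_from_right]
  field_simp


lemma tsum_shift (f : ℤ → ℝ) : ∑' y, f (y-1) = ∑' y, f y := by
  have h := (Equiv.subRight (1:ℤ)).tsum_eq (f := f)
  simpa using h

lemma tsum_shift' (f : ℤ → ℝ) : ∑' y, f (y+1) = ∑' y, f y := by
  have h := (Equiv.addRight (1:ℤ)).tsum_eq (f := f)
  simpa using h

lemma summable_heat_mul (m m' : ℕ) :
    Summable (fun x => heatK κ m x * heatK κ m' x * cbar κ x) := by
  apply summable_of_bound 0 m
  intro x hx
  rw [heatK_zero_of_far m x (by rwa [sub_zero] at hx)]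
  ring

lemma inner_heat_sum (hκ : ∀ x, 0 < κ x) (m1 m2 m3 m4 : ℕ) :
    ∑' x, (heatK κ m1 x + heatK κ m2 x) * (heatK κ m3 x + heatK κ m4 x) * cbar κ x
      = heatK κ (m1+m3) 0 + heatK κ (m1+m4) 0 + heatK κ (m2+m3) 0 + heatK κ (m2+m4) 0 := by
  have e : ∀ x, (heatK κ m1 x + heatK κ m2 x) * (heatK κ m3 x + heatK κ m4 x) * cbar κ x
      = ((heatK κ m1 x * heatK κ m3 x * cbar κ x + heatK κ m1 x * heatK κ m4 x * cbar κ x)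
          + heatK κ m2 x * heatK κ m3 x * cbar κ x)
        + heatK κ m2 x * heatK κ m4 x * cbar κ x := fun x => by ring
  rw [tsum_congr e,
    Summable.tsum_add (((summable_heat_mul m1 m3).add (summable_heat_mul m1 m4)).add
      (summable_heat_mul m2 m3)) (summable_heat_mul m2 m4),
    Summable.tsum_add ((summable_heat_mul m1 m3).add (summable_heat_mul m1 m4))
      (summable_heat_mul m2 m3),
    Summable.tsum_add (summable_heat_mul m1 m3) (summable_heat_mul m1 m4),
    inner_heat hκ, inner_heat hκ, inner_heat hκ, inner_heat hκ]

end Aux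

noncomputable def uu (κ : ℤ → ℝ) (n : ℕ) (x : ℤ) : ℝ :=
  heatK κ (2*n) x + heatK κ (2*n+1) x

section Aux2
variable {κ : ℤ → ℝ}

lemma uu_zero (n : ℕ) (x : ℤ) (h : (2*(n:ℤ)+1) < |x|) : uu κ n x = 0 := by
  rw [uu, heatK_zero_of_far (2*n) x (by push_cast; omega),
    heatK_zero_of_far (2*n+1) x (by push_cast; omega), add_zero]

lemma uu_nonneg (hκ : ∀ x, 0 < κ x) (n : ℕ) (x : ℤ) : 0 ≤ uu κ n x :=
  add_nonneg (heatK_nonneg hκ _ x) (heatK_nonneg hκ _ x)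

lemma heat_odd_zero (hκ : ∀ x, 0 < κ x) (m : ℕ) (hm : m % 2 = 1) : heatK κ m 0 = 0 := by
  apply heatK_parity
  rw [Int.even_iff]
  omega

lemma dirichlet (hκ : ∀ x, 0 < κ x) (n : ℕ) :
    ∑' x, κ x * (uu κ n (x+1) - uu κ n x)^2 = energy κ (2*n) - energy κ (2*n+1) := by
  have husupp : ∀ x : ℤ, (2*(n:ℤ)+1) < |x| → uu κ n x = 0 := fun x hx => uu_zero n x hx
  have husupp' : ∀ x : ℤ, (2*(n:ℤ)+2) < |x| → uu κ n (x+1) = 0 := by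
    intro x hx
    apply uu_zero
    rw [lt_abs] at hx ⊢; omega
  have SA : Summable (fun x => κ x * (uu κ n (x+1))^2) := by
    apply summable_of_bound 0 (2*n+2)
    intro x hx
    rw [husupp' x (by rw [sub_zero] at hx; push_cast at hx ⊢; omega)]
    ring
  have SA' : Summable (fun x => κ (x-1) * (uu κ n x)^2) := by
    apply summable_of_bound 0 (2*n+1)
    intro x hx
    rw [husupp x (by rw [sub_zero] at hx; push_cast at hx ⊢; omega)]
    ring
  have SC : Summable (fun x => κ x * (uu κ n x)^2) := by
    apply summable_of_bound 0 (2*n+1)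
    intro x hx
    rw [husupp x (by rw [sub_zero] at hx; push_cast at hx ⊢; omega)]
    ring
  have SB : Summable (fun x => κ x * (uu κ n x * uu κ n (x+1))) := by
    apply summable_of_bound 0 (2*n+1)
    intro x hx
    rw [husupp x (by rw [sub_zero] at hx; push_cast at hx ⊢; omega)]
    ring
  have SB' : Summable (fun y => κ (y-1) * (uu κ n y * uu κ n (y-1))) := by
    apply summable_of_bound 0 (2*n+1)
    intro x hx
    rw [husupp x (by rw [sub_zero] at hx; push_cast at hx ⊢; omega)]
    ring
  -- the diagonal part
  have hA : ∑' x, κ x * (uu κ n (x+1))^2 = ∑' x, κ (x-1) * (uu κ n x)^2 := by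
    rw [← tsum_shift' (fun z => κ (z-1) * (uu κ n z)^2)]
    exact tsum_congr fun x => by norm_num
  have hAC : (∑' x, κ x * (uu κ n (x+1))^2) + (∑' x, κ x * (uu κ n x)^2)
      = energy κ (2*n) + energy κ (2*n+1) := by
    rw [hA, ← Summable.tsum_add SA' SC]
    have e : ∀ x, κ (x-1) * (uu κ n x)^2 + κ x * (uu κ n x)^2
        = (heatK κ (2*n) x + heatK κ (2*n+1) x)
          * (heatK κ (2*n) x + heatK κ (2*n+1) x) * cbar κ x := by
      intro x
      rw [uu, cbar]
      ring
    rw [tsum_congr e, inner_heat_sum hκ,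
      heat_odd_zero hκ (2*n + (2*n+1)) (by omega),
      heat_odd_zero hκ ((2*n+1) + 2*n) (by omega),
      energy_eq hκ (2*n), energy_eq hκ (2*n+1),
      show 2*n + 2*n = 2*(2*n) by ring,
      show (2*n+1) + (2*n+1) = 2*(2*n+1) by ring]
    ring
  -- the cross part
  have hBB : (∑' x, κ x * (uu κ n x * uu κ n (x+1)))
        + (∑' x, κ x * (uu κ n x * uu κ n (x+1)))
      = 2 * energy κ (2*n+1) := by
    have hshift : ∑' y, κ (y-1) * (uu κ n y * uu κ n (y-1))
        = ∑' x, κ x * (uu κ n x * uu κ n (x+1)) := by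
      have h1 : ∑' y, κ (y-1) * (uu κ n y * uu κ n (y-1))
          = ∑' z, κ z * (uu κ n (z+1) * uu κ n z) := by
        rw [← tsum_shift (fun z => κ z * (uu κ n (z+1) * uu κ n z))]
        exact tsum_congr fun y => by norm_num
      rw [h1]
      exact tsum_congr fun x => by ring
    have e : ∀ y, κ (y-1) * (uu κ n y * uu κ n (y-1)) + κ y * (uu κ n y * uu κ n (y+1))
        = (heatK κ (2*n) y + heatK κ (2*n+1) y)
          * (heatK κ (2*n+1) y + heatK κ (2*n+1+1) y) * cbar κ y := by
      intro y
      have r1 := heat_rec hκ (2*n) y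
      have r2 := heat_rec hκ (2*n+1) y
      rw [uu, uu, uu]
      linear_combination (heatK κ (2*n) y + heatK κ (2*n+1) y) * r1
        + (heatK κ (2*n) y + heatK κ (2*n+1) y) * r2
    calc (∑' x, κ x * (uu κ n x * uu κ n (x+1)))
          + (∑' x, κ x * (uu κ n x * uu κ n (x+1)))
        = (∑' y, κ (y-1) * (uu κ n y * uu κ n (y-1)))
          + (∑' y, κ y * (uu κ n y * uu κ n (y+1))) := by rw [hshift]
      _ = ∑' y, (κ (y-1) * (uu κ n y * uu κ n (y-1)) + κ y * (uu κ n y * uu κ n (y+1))) := by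
          rw [Summable.tsum_add SB' SB]
      _ = heatK κ (2*n + (2*n+1)) 0 + heatK κ (2*n + (2*n+1+1)) 0
          + heatK κ ((2*n+1) + (2*n+1)) 0 + heatK κ ((2*n+1) + (2*n+1+1)) 0 := by
          rw [tsum_congr e, inner_heat_sum hκ]
      _ = 2 * energy κ (2*n+1) := by
          rw [heat_odd_zero hκ (2*n + (2*n+1)) (by omega),
            heat_odd_zero hκ ((2*n+1) + (2*n+1+1)) (by omega),
            energy_eq hκ (2*n+1),
            show 2*n + (2*n+1+1) = 2*(2*n+1) by ring,
            show (2*n+1) + (2*n+1) = 2*(2*n+1) by ring]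
          ring
  -- combine
  have e0 : ∀ x, κ x * (uu κ n (x+1) - uu κ n x)^2
      = (κ x * (uu κ n (x+1))^2 + κ x * (uu κ n x)^2)
        - (κ x * (uu κ n x * uu κ n (x+1)) + κ x * (uu κ n x * uu κ n (x+1))) := by
    intro x; ring
  rw [tsum_congr e0, Summable.tsum_sub (SA.add SC) (SB.add SB), Summable.tsum_add SA SC, Summable.tsum_add SB SB,
    hAC]
  rw [hBB]
  ring

end Aux2

lemma telescope (f : ℤ → ℝ) (k : ℕ) : ∀ a : ℤ,
    ∑ x ∈ Finset.Ico a (a + (k:ℤ)), (f (x+1) - f x) = f (a + k) - f a := by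
  induction k with
  | zero => intro a; simp
  | succ k ih =>
    intro a
    have hset : Finset.Ico a (a + ((k:ℤ)+1)) = insert (a + (k:ℤ)) (Finset.Ico a (a + (k:ℤ))) := by
      ext z
      simp only [Finset.mem_Ico, Finset.mem_insert]
      omega
    push_cast
    rw [hset, Finset.sum_insert (by simp [Finset.mem_Ico])]
    rw [ih a]
    push_cast
    ring

lemma sum_telescope_int (f : ℤ → ℝ) (a b : ℤ) (h : a ≤ b) :
    ∑ x ∈ Finset.Ico a b, (f (x+1) - f x) = f b - f a := by
  have hk := telescope f (b - a).toNat a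
  rw [show a + ((b-a).toNat : ℤ) = b by omega] at hk
  exact hk

theorem energy_oscillation_bound (κ : ℤ → ℝ) (hκ : ∀ x, 0 < κ x)
    (n : ℕ) (hn : 1 ≤ n) (K : ℕ) (hK : 1 ≤ K) :
    energy κ n -
        1 / (∑ x ∈ (Finset.Ioo (-(K : ℤ)) (K : ℤ)).filter (fun x => Even x), cbar κ x)
      ≤ Real.sqrt (energy κ (2 * n) - energy κ (2 * n + 1)) *
          Real.sqrt (∑ x ∈ Finset.Ico (-(K : ℤ)) (K : ℤ), 1 / κ x) := by
  have hK1 : (1:ℤ) ≤ (K:ℤ) := by exact_mod_cast hK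
  set Bs := (Finset.Ioo (-(K : ℤ)) (K : ℤ)).filter (fun x => Even x) with hBs
  have h0B : (0:ℤ) ∈ Bs := by
    simp only [Bs, Finset.mem_filter, Finset.mem_Ioo]
    exact ⟨⟨by omega, by omega⟩, Even.zero⟩
  have hCb : 0 < ∑ x ∈ Bs, cbar κ x := Finset.sum_pos (fun x _ => cbar_pos hκ x) ⟨0, h0B⟩
  have hEn : energy κ n = uu κ n 0 := by
    rw [energy_eq hκ n, uu, heat_odd_zero hκ (2*n+1) (by omega), add_zero]
  -- mass bound
  have hmass : ∑ x ∈ Bs, uu κ n x * cbar κ x ≤ 1 := by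
    have hterm : ∀ x ∈ Bs, uu κ n x * cbar κ x = walk κ (2*n) 0 x := by
      intro x hx
      have hev : Even x := (Finset.mem_filter.mp hx).2
      rw [uu, heatK, heatK,
        walk_parity (2*n+1) x (by simp only [Int.even_iff] at hev ⊢; omega),
        zero_div, add_zero, div_mul_cancel₀ _ (cbar_ne hκ x)]
    rw [Finset.sum_congr rfl hterm]
    have hsum : Summable (fun x => walk κ (2*n) 0 x) :=
      summable_of_bound 0 (2*n) (fun x hx => walk_zero_of_far _ _ _ hx)
    calc ∑ x ∈ Bs, walk κ (2*n) 0 x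
        ≤ ∑' x, walk κ (2*n) 0 x := Summable.sum_le_tsum Bs (fun x _ => walk_nonneg hκ _ _ _) hsum
      _ = 1 := walk_total hκ (2*n) 0
  -- minimum point
  have hmin : ∃ x ∈ Bs, uu κ n x ≤ 1 / (∑ x ∈ Bs, cbar κ x) := by
    by_contra hcon
    push_neg at hcon
    have h1 : ∑ x ∈ Bs, (1 / (∑ x ∈ Bs, cbar κ x)) * cbar κ x
        < ∑ x ∈ Bs, uu κ n x * cbar κ x :=
      Finset.sum_lt_sum_of_nonempty ⟨0, h0B⟩
        (fun x hx => mul_lt_mul_of_pos_right (hcon x hx) (cbar_pos hκ x))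
    rw [← Finset.mul_sum, one_div, inv_mul_cancel₀ hCb.ne'] at h1
    linarith
  obtain ⟨xs, hxsB, hxs⟩ := hmin
  obtain ⟨hxs1, hxs2⟩ := Finset.mem_Ioo.mp (Finset.mem_filter.mp hxsB).1
  -- telescoping bound
  have hbound : uu κ n 0 - uu κ n xs
      ≤ ∑ x ∈ Finset.Ico (-(K:ℤ)) (K:ℤ), |uu κ n (x+1) - uu κ n x| := by
    rcases le_or_gt 0 xs with h | h
    · have ht := sum_telescope_int (uu κ n) 0 xs h
      have h2 : uu κ n 0 - uu κ n xs
          = -(∑ x ∈ Finset.Ico 0 xs, (uu κ n (x+1) - uu κ n x)) := by rw [ht]; ring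
      calc uu κ n 0 - uu κ n xs
          ≤ |∑ x ∈ Finset.Ico 0 xs, (uu κ n (x+1) - uu κ n x)| := by
            rw [h2]; exact neg_le_abs _
        _ ≤ ∑ x ∈ Finset.Ico 0 xs, |uu κ n (x+1) - uu κ n x| :=
            Finset.abs_sum_le_sum_abs _ _
        _ ≤ ∑ x ∈ Finset.Ico (-(K:ℤ)) (K:ℤ), |uu κ n (x+1) - uu κ n x| :=
            Finset.sum_le_sum_of_subset_of_nonneg
              (Finset.Ico_subset_Ico (by omega) (le_of_lt hxs2))
              (fun x _ _ => abs_nonneg _)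
    · have ht := sum_telescope_int (uu κ n) xs 0 h.le
      calc uu κ n 0 - uu κ n xs
          = ∑ x ∈ Finset.Ico xs 0, (uu κ n (x+1) - uu κ n x) := ht.symm
        _ ≤ |∑ x ∈ Finset.Ico xs 0, (uu κ n (x+1) - uu κ n x)| := le_abs_self _
        _ ≤ ∑ x ∈ Finset.Ico xs 0, |uu κ n (x+1) - uu κ n x| :=
            Finset.abs_sum_le_sum_abs _ _
        _ ≤ ∑ x ∈ Finset.Ico (-(K:ℤ)) (K:ℤ), |uu κ n (x+1) - uu κ n x| :=
            Finset.sum_le_sum_of_subset_of_nonneg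
              (Finset.Ico_subset_Ico (le_of_lt hxs1) (by omega))
              (fun x _ _ => abs_nonneg _)
  -- Cauchy-Schwarz
  have hCS : ∑ x ∈ Finset.Ico (-(K:ℤ)) (K:ℤ), |uu κ n (x+1) - uu κ n x|
      ≤ Real.sqrt (∑ x ∈ Finset.Ico (-(K:ℤ)) (K:ℤ), κ x * (uu κ n (x+1) - uu κ n x)^2)
        * Real.sqrt (∑ x ∈ Finset.Ico (-(K:ℤ)) (K:ℤ), 1 / κ x) := by
    have h := Real.sum_mul_le_sqrt_mul_sqrt (Finset.Ico (-(K:ℤ)) (K:ℤ))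
      (fun x => Real.sqrt (κ x) * |uu κ n (x+1) - uu κ n x|)
      (fun x => 1 / Real.sqrt (κ x))
    have e1 : ∀ x, (Real.sqrt (κ x) * |uu κ n (x+1) - uu κ n x|) * (1 / Real.sqrt (κ x))
        = |uu κ n (x+1) - uu κ n x| := by
      intro x
      have hs : Real.sqrt (κ x) ≠ 0 := (Real.sqrt_pos.mpr (hκ x)).ne'
      field_simp
    have e2 : ∀ x, (Real.sqrt (κ x) * |uu κ n (x+1) - uu κ n x|) ^ 2
        = κ x * (uu κ n (x+1) - uu κ n x)^2 := by
      intro x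
      rw [mul_pow, Real.sq_sqrt (hκ x).le, sq_abs]
    have e3 : ∀ x, (1 / Real.sqrt (κ x)) ^ 2 = 1 / κ x := by
      intro x
      rw [div_pow, one_pow, Real.sq_sqrt (hκ x).le]
    simp only [e1, e2, e3] at h
    exact h
  -- Dirichlet bound
  have Sgrad : Summable (fun x => κ x * (uu κ n (x+1) - uu κ n x)^2) := by
    apply summable_of_bound 0 (2*n+2)
    intro x hx
    rw [sub_zero] at hx
    rw [uu_zero n x (by push_cast at hx ⊢; rw [lt_abs] at hx ⊢; omega),
      uu_zero n (x+1) (by push_cast at hx ⊢; rw [lt_abs] at hx ⊢; omega)]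
    ring
  have hsubsum : ∑ x ∈ Finset.Ico (-(K:ℤ)) (K:ℤ), κ x * (uu κ n (x+1) - uu κ n x)^2
      ≤ energy κ (2*n) - energy κ (2*n+1) := by
    rw [← dirichlet hκ n]
    exact Summable.sum_le_tsum _ (fun x _ => mul_nonneg (hκ x).le (sq_nonneg _)) Sgrad
  calc energy κ n - 1 / (∑ x ∈ Bs, cbar κ x)
      ≤ uu κ n 0 - uu κ n xs := by rw [hEn]; linarith
    _ ≤ ∑ x ∈ Finset.Ico (-(K:ℤ)) (K:ℤ), |uu κ n (x+1) - uu κ n x| := hbound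
    _ ≤ Real.sqrt (∑ x ∈ Finset.Ico (-(K:ℤ)) (K:ℤ), κ x * (uu κ n (x+1) - uu κ n x)^2)
        * Real.sqrt (∑ x ∈ Finset.Ico (-(K:ℤ)) (K:ℤ), 1 / κ x) := hCS
    _ ≤ Real.sqrt (energy κ (2*n) - energy κ (2*n+1))
        * Real.sqrt (∑ x ∈ Finset.Ico (-(K:ℤ)) (K:ℤ), 1 / κ x) :=
        mul_le_mul_of_nonneg_right (Real.sqrt_le_sqrt hsubsum) (Real.sqrt_nonneg _)
end
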